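/- arXiv:1711.00994 — 3 statements merged into one kernel-verified Lean document; each statement's English description precedes it below -/
import Mathlib

section
/- Let p > 1 and let η, η*, ψ_R, ψ*_R, P(R) be as in the context. There exists a constant C₃ > 0, depending only on η and p, such that for every R > 0 and every (x,t) ∈ P(R), |∇_x ψ_R(x,t)| ≤ C₃ R^{-1} |x| (log|x|) [ψ*_R(x,t)]^{1/p}, where ∇_x denotes the gradient in the x-variables and |∇_x ψ_R| its Euclidean norm. -/
open MeasureTheory Real Set

noncomputable section

/-- The plane `ℝ²` with the Euclidean norm. -/
abbrev E2 := EuclideanSpace ℝ (Fin 2)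

/-- The exterior domain `Ω = {x ∈ ℝ² : |x| > 1}`. -/
def Omega : Set E2 := {x : E2 | 1 < ‖x‖}

/-- `η` is of class `C²` on `[0,∞)`, equals `1` on `[0,1/2]`, is nonincreasing on `[1/2,1]`
and vanishes on `[1,∞)`. -/
def etaOK (η : ℝ → ℝ) : Prop :=
  ContDiffOn ℝ 2 η (Set.Ici 0) ∧
  (∀ s ∈ Set.Icc (0 : ℝ) (1 / 2), η s = 1) ∧
  AntitoneOn η (Set.Icc (1 / 2 : ℝ) 1) ∧
  (∀ s : ℝ, 1 ≤ s → η s = 0)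

/-- `η*(s) = 0` for `s < 1/2` and `η*(s) = η(s)` for `s ≥ 1/2`. -/
def etaStar (η : ℝ → ℝ) (s : ℝ) : ℝ := if s < 1 / 2 then 0 else η s

/-- `ψ_R(x,t) = [η(((|x|-1)² + t)/R)]^{2p'}` with `p' = p/(p-1)`. -/
def psi (η : ℝ → ℝ) (p R : ℝ) (x : E2) (t : ℝ) : ℝ :=
  η (((‖x‖ - 1) ^ 2 + t) / R) ^ (2 * (p / (p - 1)))

/-- `ψ*_R(x,t) = [η*(((|x|-1)² + t)/R)]^{2p'}` with `p' = p/(p-1)`. -/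
def psiStar (η : ℝ → ℝ) (p R : ℝ) (x : E2) (t : ℝ) : ℝ :=
  etaStar η (((‖x‖ - 1) ^ 2 + t) / R) ^ (2 * (p / (p - 1)))

/-- `P(R) = {(x,t) ∈ Ω × [0,∞) : (|x|-1)² + t ≤ R}`. -/
def Pset (R : ℝ) : Set (E2 × ℝ) :=
  {q : E2 × ℝ | q.1 ∈ Omega ∧ 0 ≤ q.2 ∧ (‖q.1‖ - 1) ^ 2 + q.2 ≤ R}

/-- The Laplacian in the `x`-variables: the sum of the two second partial derivatives. -/
def lapx {F : Type*} [NormedAddCommGroup F] [NormedSpace ℝ F] (f : E2 → F) (x : E2) : F :=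
  ∑ i : Fin 2, iteratedDeriv 2 (fun s : ℝ => f (x + s • EuclideanSpace.single i (1 : ℝ))) 0

set_option maxHeartbeats 1000000 in
/-- There is `C₃ > 0`, depending only on `η` and `p`, such that for all `R > 0` and
`(x,t) ∈ P(R)`, `|∇_x ψ_R(x,t)| ≤ C₃ R⁻¹ |x| (log |x|) [ψ*_R(x,t)]^{1/p}`. -/
theorem statement3 (p : ℝ) (hp : 1 < p) (η : ℝ → ℝ) (hη : etaOK η) :
    ∃ C₃ > (0 : ℝ), ∀ R > (0 : ℝ), ∀ q ∈ Pset R,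
      ‖fderiv ℝ (fun x : E2 => psi η p R x q.2) q.1‖
        ≤ C₃ * R⁻¹ * ‖q.1‖ * Real.log ‖q.1‖ * psiStar η p R q.1 q.2 ^ (1 / p) := by
  obtain ⟨hC2, h1η, hanti, h0η⟩ := hη
  set c : ℝ := 2 * (p / (p - 1)) with hcdef
  have hp1 : (0 : ℝ) < p - 1 := by linarith
  have hp0 : (0 : ℝ) < p := by linarith
  have hcpos : (0 : ℝ) < c := by positivity
  have hc2 : (2 : ℝ) < c := by
    have : (1 : ℝ) < p / (p - 1) := (one_lt_div hp1).mpr (by linarith)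
    linarith
  have hc1 : (1 : ℝ) ≤ c := by linarith
  -- η at 1/2 is 1
  have hη12 : η (1 / 2) = 1 := h1η _ ⟨by norm_num, le_rfl⟩
  have hη1 : η 1 = 0 := h0η 1 le_rfl
  -- η is between 0 and 1 on [1/2, 1]
  have hηmem : ∀ s : ℝ, 1 / 2 ≤ s → s ≤ 1 → 0 ≤ η s ∧ η s ≤ 1 := by
    intro s hs1 hs2
    constructor
    · have := hanti ⟨hs1, hs2⟩ ⟨by linarith, le_rfl⟩ hs2
      rw [hη1] at this; linarith
    · have := hanti ⟨le_rfl, by norm_num⟩ ⟨hs1, hs2⟩ hs1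
      rw [hη12] at this; linarith
  -- continuity of deriv η on (0, ∞), and a bound M on [1/2, 1]
  have hderivcont : ContinuousOn (deriv η) (Set.Ioi (0 : ℝ)) :=
    (hC2.mono (Set.Ioi_subset_Ici le_rfl)).continuousOn_deriv_of_isOpen isOpen_Ioi
      (by norm_num)
  have hsub : Set.Icc (1 / 2 : ℝ) 1 ⊆ Set.Ioi (0 : ℝ) := fun y hy => by
    simp only [Set.mem_Ioi]; have := hy.1; linarith
  obtain ⟨s₀, hs₀mem, hs₀max'⟩ :=
    (isCompact_Icc (a := (1 / 2 : ℝ)) (b := 1)).exists_isMaxOn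
      ⟨1 / 2, by norm_num, by norm_num⟩
      ((hderivcont.mono hsub).abs)
  have hs₀max : ∀ y ∈ Set.Icc (1/2:ℝ) 1, |deriv η y| ≤ |deriv η s₀| :=
    fun y hy => hs₀max' hy
  set M : ℝ := |deriv η s₀| with hMdef
  have hM0 : 0 ≤ M := abs_nonneg _
  refine ⟨2 * c * (M + 1), by positivity, ?_⟩
  intro R hR q hq
  obtain ⟨hx, ht, hPR⟩ := hq
  set x : E2 := q.1 with hxdef
  set t : ℝ := q.2 with htdef
  have hx1 : (1 : ℝ) < ‖x‖ := hx
  set s₁ : ℝ := ((‖x‖ - 1) ^ 2 + t) / R with hs₁def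
  have hs₁pos : 0 < s₁ := by
    apply div_pos _ hR
    have : 0 < (‖x‖ - 1) ^ 2 := by nlinarith
    linarith
  have hs₁le : s₁ ≤ 1 := (div_le_one hR).mpr hPR
  -- nonnegativity of the right-hand side
  have hlog : 0 ≤ Real.log ‖x‖ := Real.log_nonneg (le_of_lt hx1)
  have hpsiStar_nonneg : 0 ≤ psiStar η p R x t := by
    apply Real.rpow_nonneg
    unfold etaStar
    split
    · exact le_rfl
    · rename_i h
      push_neg at h
      rcases le_or_gt (((‖x‖ - 1) ^ 2 + t) / R) 1 with h2 | h2
      · exact (hηmem _ h h2).1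
      · rw [h0η _ (le_of_lt h2)]
  have hRHS : 0 ≤ 2 * c * (M + 1) * R⁻¹ * ‖x‖ * Real.log ‖x‖ * psiStar η p R x t ^ (1 / p) := by
    have h1 : 0 ≤ psiStar η p R x t ^ (1 / p) := Real.rpow_nonneg hpsiStar_nonneg _
    have h2 : (0:ℝ) ≤ ‖x‖ := norm_nonneg _
    positivity
  rcases lt_or_ge s₁ (1 / 2) with hcase | hcase
  · -- ψ is locally constant equal to 1 near x
    have hcont : ContinuousAt (fun y : E2 => ((‖y‖ - 1) ^ 2 + t) / R) x := by
      fun_prop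
    have hev : ∀ᶠ y in nhds x, ((‖y‖ - 1) ^ 2 + t) / R < 1 / 2 :=
      hcont.eventually_lt_const hcase
    have hloc : (fun y : E2 => psi η p R y t) =ᶠ[nhds x] fun _ => (1 : ℝ) := by
      filter_upwards [hev] with y hy
      have hy0 : 0 ≤ ((‖y‖ - 1) ^ 2 + t) / R := by positivity
      unfold psi
      rw [h1η _ ⟨hy0, le_of_lt hy⟩, Real.one_rpow]
    calc ‖fderiv ℝ (fun y : E2 => psi η p R y t) x‖
        = ‖fderiv ℝ (fun _ : E2 => (1 : ℝ)) x‖ := by rw [hloc.fderiv_eq]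
      _ = 0 := by rw [fderiv_fun_const]; simp
      _ ≤ _ := hRHS
  · -- main case: 1/2 ≤ s₁ ≤ 1
    have hηnn : 0 ≤ η s₁ := (hηmem _ hcase hs₁le).1
    have hηle1 : η s₁ ≤ 1 := (hηmem _ hcase hs₁le).2
    have hMb : |deriv η s₁| ≤ M := hs₀max s₁ ⟨hcase, hs₁le⟩
    -- derivative of the norm
    have hxne : x ≠ 0 := by
      intro h; rw [h] at hx1; simp at hx1; linarith
    set L : E2 →L[ℝ] ℝ := fderiv ℝ (fun y : E2 => ‖y‖) x with hLdef
    have hnorm_diff : HasFDerivAt (fun y : E2 => ‖y‖) L x := by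
      have : DifferentiableAt ℝ (fun y : E2 => ‖y‖) x :=
        (contDiffAt_norm ℝ (n := 1) hxne).differentiableAt one_ne_zero
      exact this.hasFDerivAt
    have hLle : ‖L‖ ≤ 1 := by
      have := norm_fderiv_le_of_lipschitz ℝ (lipschitzWith_one_norm (E := E2)) (x₀ := x)
      simpa using this
    -- the one-dimensional profile G(r) = η (((r-1)^2 + t)/R) ^ c
    have hGa : HasDerivAt (fun r : ℝ => ((r - 1) ^ 2 + t) / R) (2 * (‖x‖ - 1) / R) ‖x‖ := by
      have h := (((hasDerivAt_id (‖x‖ : ℝ)).sub_const 1).pow 2).add_const t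
      have h2 := h.div_const R
      refine HasDerivAt.congr_deriv h2 ?_
      simp only [id_eq]
      push_cast
      ring
    have hηdiff : HasDerivAt η (deriv η s₁) s₁ := by
      have hct : ContDiffAt ℝ 2 η s₁ := hC2.contDiffAt (Ici_mem_nhds hs₁pos)
      exact (hct.differentiableAt (by norm_num)).hasDerivAt
    have hGb : HasDerivAt (fun r : ℝ => η (((r - 1) ^ 2 + t) / R))
        (deriv η s₁ * (2 * (‖x‖ - 1) / R)) ‖x‖ := HasDerivAt.comp (‖x‖) (hs₁def ▸ hηdiff) hGa
    have hrp : HasDerivAt (fun u : ℝ => u ^ c) (c * η s₁ ^ (c - 1)) (η s₁) :=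
      Real.hasDerivAt_rpow_const (Or.inr hc1)
    have hGc : HasDerivAt (fun r : ℝ => η (((r - 1) ^ 2 + t) / R) ^ c)
        (c * η s₁ ^ (c - 1) * (deriv η s₁ * (2 * (‖x‖ - 1) / R))) ‖x‖ := by exact HasDerivAt.comp (‖x‖) hrp hGb
    have hF : HasFDerivAt (fun y : E2 => psi η p R y t)
        ((c * η s₁ ^ (c - 1) * (deriv η s₁ * (2 * (‖x‖ - 1) / R))) • L) x := by
      have := hGc.comp_hasFDerivAt x hnorm_diff
      exact this
    rw [hF.fderiv]
    -- ψ* at this point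
    have hpsiStar_eq : psiStar η p R x t = η s₁ ^ c := by
      unfold psiStar etaStar
      rw [if_neg (not_lt.mpr hcase)]
    set Q : ℝ := (η s₁ ^ c) ^ (1 / p) with hQdef
    have hQnn : 0 ≤ Q := Real.rpow_nonneg (Real.rpow_nonneg hηnn _) _
    -- key rpow identity: η s₁ ^ (c - 1) = η s₁ * Q
    have hkey : η s₁ ^ (c - 1) = η s₁ * Q := by
      rcases eq_or_lt_of_le hηnn with h0 | h0
      · rw [hQdef, ← h0, Real.zero_rpow (by positivity : c ≠ 0),
          Real.zero_rpow (by positivity : (1:ℝ)/p ≠ 0),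
          Real.zero_rpow (by intro h; nlinarith : c - 1 ≠ 0), mul_zero]
      · have e1 : Q = η s₁ ^ (c * (1 / p)) := by
          rw [hQdef, ← Real.rpow_mul hηnn]
        have e2 : c - 1 = 1 + c * (1 / p) := by
          rw [hcdef]
          field_simp
          ring
        rw [e1, e2, Real.rpow_add h0, Real.rpow_one]
    -- bound the norm
    have hD0 : 0 ≤ 2 * (‖x‖ - 1) / R := by
      apply div_nonneg _ (le_of_lt hR); linarith
    have hnormle : ‖(c * η s₁ ^ (c - 1) * (deriv η s₁ * (2 * (‖x‖ - 1) / R))) • L‖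
        ≤ c * η s₁ ^ (c - 1) * (|deriv η s₁| * (2 * (‖x‖ - 1) / R)) := by
      have hη_pow_nn : 0 ≤ η s₁ ^ (c - 1) := Real.rpow_nonneg hηnn _
      calc ‖(c * η s₁ ^ (c - 1) * (deriv η s₁ * (2 * (‖x‖ - 1) / R))) • L‖
          ≤ ‖c * η s₁ ^ (c - 1) * (deriv η s₁ * (2 * (‖x‖ - 1) / R))‖ * ‖L‖ :=
            ContinuousLinearMap.opNorm_smul_le _ _
        _ ≤ ‖c * η s₁ ^ (c - 1) * (deriv η s₁ * (2 * (‖x‖ - 1) / R))‖ * 1 := by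
            apply mul_le_mul_of_nonneg_left hLle (norm_nonneg _)
        _ = |c * η s₁ ^ (c - 1) * (deriv η s₁ * (2 * (‖x‖ - 1) / R))| := by
            rw [mul_one, Real.norm_eq_abs]
        _ = c * η s₁ ^ (c - 1) * (|deriv η s₁| * (2 * (‖x‖ - 1) / R)) := by
            rw [abs_mul, abs_of_nonneg (by positivity : 0 ≤ c * η s₁ ^ (c - 1)),
              abs_mul, abs_of_nonneg hD0]
    -- the geometric inequality ‖x‖ - 1 ≤ ‖x‖ log ‖x‖
    have hgeom : ‖x‖ - 1 ≤ ‖x‖ * Real.log ‖x‖ := by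
      have h : Real.log ‖x‖⁻¹ ≤ ‖x‖⁻¹ - 1 :=
        Real.log_le_sub_one_of_pos (by positivity)
      rw [Real.log_inv] at h
      have hxpos : (0:ℝ) < ‖x‖ := by linarith
      have h3 : ‖x‖ * (-Real.log ‖x‖) ≤ ‖x‖ * (‖x‖⁻¹ - 1) :=
        mul_le_mul_of_nonneg_left h (le_of_lt hxpos)
      rw [mul_sub, mul_inv_cancel₀ (ne_of_gt hxpos), mul_neg, mul_one] at h3
      linarith
    calc ‖(c * η s₁ ^ (c - 1) * (deriv η s₁ * (2 * (‖x‖ - 1) / R))) • L‖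
        ≤ c * η s₁ ^ (c - 1) * (|deriv η s₁| * (2 * (‖x‖ - 1) / R)) := hnormle
      _ = c * (η s₁ * Q) * (|deriv η s₁| * (2 * (‖x‖ - 1) / R)) := by rw [hkey]
      _ ≤ c * (1 * Q) * ((M + 1) * (2 * (‖x‖ * Real.log ‖x‖) / R)) := by
          have h1 : η s₁ * Q ≤ 1 * Q := mul_le_mul_of_nonneg_right hηle1 hQnn
          have h2 : |deriv η s₁| ≤ M + 1 := by linarith
          have h3 : 2 * (‖x‖ - 1) / R ≤ 2 * (‖x‖ * Real.log ‖x‖) / R := by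
            gcongr
          have base : c * (η s₁ * Q) ≤ c * (1 * Q) :=
            mul_le_mul_of_nonneg_left h1 (le_of_lt hcpos)
          have rgt : |deriv η s₁| * (2 * (‖x‖ - 1) / R)
              ≤ (M + 1) * (2 * (‖x‖ * Real.log ‖x‖) / R) :=
            mul_le_mul h2 h3 hD0 (by linarith)
          exact mul_le_mul base rgt
            (mul_nonneg (abs_nonneg _) hD0)
            (mul_nonneg (le_of_lt hcpos) (by rw [one_mul]; exact hQnn))
      _ = 2 * c * (M + 1) * R⁻¹ * ‖x‖ * Real.log ‖x‖ * Q := by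
          rw [div_eq_mul_inv]
          ring
      _ = 2 * c * (M + 1) * R⁻¹ * ‖x‖ * Real.log ‖x‖ * psiStar η p R x t ^ (1 / p) := by
          rw [hQdef, hpsiStar_eq]
end
end

section
/- Let p > 1 and let η, η*, ψ_R, ψ*_R, P(R) be as in the context. Let T > 0, let w : Ω × [0,T) → [0,∞) be measurable and integrable on P(R) for every R ∈ (0,T), and for r ∈ (0,T) set y(r) = ∬_{P(r)} w(x,t) ψ*_r(x,t) dx dt. Then for every R ∈ (0,T), ∫_0^R y(r) r^{-1} dr ≤ (log 2) ∬_{P(R)} w(x,t) ψ_R(x,t) dx dt. -/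
open MeasureTheory Real Set

noncomputable section

section Aux

variable {η : ℝ → ℝ}

lemma eta_nonneg (hη : etaOK η) {s : ℝ} (hs : 0 ≤ s) : 0 ≤ η s := by
  obtain ⟨-, hone, hanti, hzero⟩ := hη
  rcases le_or_gt s (1 / 2) with h | h
  · rw [hone s ⟨hs, h⟩]; norm_num
  rcases le_or_gt s 1 with h1 | h1
  · have := hanti ⟨h.le, h1⟩ ⟨by norm_num, le_rfl⟩ h1
    rw [hzero 1 le_rfl] at this; exact this
  · rw [hzero s h1.le]

lemma eta_le_one (hη : etaOK η) {s : ℝ} (hs : 0 ≤ s) : η s ≤ 1 := by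
  obtain ⟨-, hone, hanti, hzero⟩ := hη
  rcases le_or_gt s (1 / 2) with h | h
  · rw [hone s ⟨hs, h⟩]
  rcases le_or_gt s 1 with h1 | h1
  · have := hanti ⟨le_rfl, by norm_num⟩ ⟨h.le, h1⟩ h.le
    rwa [hone (1 / 2) ⟨by norm_num, le_rfl⟩] at this
  · rw [hzero s h1.le]; norm_num

lemma etaStar_nonneg (hη : etaOK η) (s : ℝ) : 0 ≤ etaStar η s := by
  rw [etaStar]; split_ifs with h
  · exact le_rfl
  · exact eta_nonneg hη (le_trans (by norm_num) (not_lt.mp h))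

lemma etaStar_le_one (hη : etaOK η) (s : ℝ) : etaStar η s ≤ 1 := by
  rw [etaStar]; split_ifs with h
  · norm_num
  · exact eta_le_one hη (le_trans (by norm_num) (not_lt.mp h))

lemma etaStar_le_eta (hη : etaOK η) {a b : ℝ} (ha : 0 ≤ a) (hab : a ≤ b) :
    etaStar η b ≤ η a := by
  have hnn := eta_nonneg hη ha
  rw [etaStar]; split_ifs with h
  · exact hnn
  push_neg at h
  obtain ⟨-, hone, hanti, hzero⟩ := hη
  rcases le_or_gt b 1 with hb1 | hb1
  · rcases le_or_gt (1 / 2) a with ha2 | ha2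
    · exact hanti ⟨ha2, le_trans hab hb1⟩ ⟨h, hb1⟩ hab
    · rw [hone a ⟨ha, ha2.le⟩]
      have := hanti ⟨le_rfl, by norm_num⟩ ⟨h, hb1⟩ h
      rwa [hone (1 / 2) ⟨by norm_num, le_rfl⟩] at this
  · rw [hzero b hb1.le]; exact hnn

lemma measurable_etaStar (hη : etaOK η) : Measurable (etaStar η) := by
  have hcont : Continuous fun s : ℝ => η (max s (1 / 2)) :=
    hη.1.continuousOn.comp_continuous (continuous_id.max continuous_const)
      (fun x => le_trans (by norm_num) (le_max_right x (1 / 2)))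
  have heq : etaStar η = (Set.Ici (1 / 2 : ℝ)).indicator fun s => η (max s (1 / 2)) := by
    funext s
    by_cases h : s < 1 / 2
    · rw [etaStar, if_pos h, Set.indicator_of_notMem (by simpa using h)]
    · rw [etaStar, if_neg h, Set.indicator_of_mem (by simpa using not_lt.mp h),
        max_eq_left (not_lt.mp h)]
  rw [heq]
  exact hcont.measurable.indicator measurableSet_Ici

/-- The integrand cut off at `P(r)`. -/
def Ffun (η : ℝ → ℝ) (p : ℝ) (w : E2 → ℝ → ℝ) (r : ℝ) (q : E2 × ℝ) : ℝ :=
  (Pset r).indicator (fun q => w q.1 q.2 * psiStar η p r q.1 q.2) q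

/-- The joint (in `(r,q)`) nonnegative integrand. -/
def Gfun (η : ℝ → ℝ) (p : ℝ) (w : E2 → ℝ → ℝ) (z : ℝ × (E2 × ℝ)) : ENNReal :=
  ENNReal.ofReal (Ffun η p w z.1 z.2 * z.1⁻¹)

lemma sigmaCont : Continuous fun q : E2 × ℝ => (‖q.1‖ - 1) ^ 2 + q.2 := by
  fun_prop

lemma measurableSet_Pset (r : ℝ) : MeasurableSet (Pset r) := by
  have h1 : MeasurableSet {q : E2 × ℝ | 1 < ‖q.1‖} :=
    measurableSet_lt measurable_const measurable_fst.norm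
  have h2 : MeasurableSet {q : E2 × ℝ | 0 ≤ q.2} :=
    measurableSet_le measurable_const measurable_snd
  have h3 : MeasurableSet {q : E2 × ℝ | (‖q.1‖ - 1) ^ 2 + q.2 ≤ r} :=
    measurableSet_le sigmaCont.measurable measurable_const
  have : Pset r = ({q : E2 × ℝ | 1 < ‖q.1‖} ∩ {q : E2 × ℝ | 0 ≤ q.2}) ∩
      {q : E2 × ℝ | (‖q.1‖ - 1) ^ 2 + q.2 ≤ r} := by
    ext q; simp [Pset, Omega, and_assoc]
  rw [this]; exact (h1.inter h2).inter h3

lemma Pset_mono {r r' : ℝ} (h : r ≤ r') : Pset r ⊆ Pset r' :=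
  fun q hq => ⟨hq.1, hq.2.1, le_trans hq.2.2 h⟩

end Aux

/-- With `y(r) = ∬_{P(r)} w ψ*_r dx dt`, for every `R ∈ (0,T)` one has
`∫_0^R y(r) r⁻¹ dr ≤ (log 2) ∬_{P(R)} w ψ_R dx dt`. -/
theorem statement6 (p : ℝ) (hp : 1 < p) (η : ℝ → ℝ) (hη : etaOK η)
    (T : ℝ) (hT : 0 < T) (w : E2 → ℝ → ℝ)
    (hw_meas : Measurable fun q : E2 × ℝ => w q.1 q.2)
    (hw_nonneg : ∀ x : E2, ∀ t : ℝ, x ∈ Omega → 0 ≤ t → t < T → 0 ≤ w x t)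
    (hw_int : ∀ R ∈ Set.Ioo (0 : ℝ) T,
      IntegrableOn (fun q : E2 × ℝ => w q.1 q.2) (Pset R))
    (R : ℝ) (hR : R ∈ Set.Ioo (0 : ℝ) T) :
    ∫ r in (0 : ℝ)..R, (∫ q in Pset r, w q.1 q.2 * psiStar η p r q.1 q.2) * r⁻¹
      ≤ Real.log 2 * ∫ q in Pset R, w q.1 q.2 * psi η p R q.1 q.2 := by
  obtain ⟨hR0, hRT⟩ := hR
  have hp1 : (0 : ℝ) < p - 1 := by linarith
  have he : (0 : ℝ) < 2 * (p / (p - 1)) := by positivity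
  set e : ℝ := 2 * (p / (p - 1)) with he_def
  -- nonnegativity of w on Pset r for r ≤ R
  have hwnn : ∀ r ≤ R, ∀ q ∈ Pset r, 0 ≤ w q.1 q.2 := by
    intro r hr q hq
    refine hw_nonneg q.1 q.2 hq.1 hq.2.1 ?_
    have h1 : q.2 ≤ (‖q.1‖ - 1) ^ 2 + q.2 := by nlinarith [sq_nonneg (‖q.1‖ - 1)]
    exact lt_of_le_of_lt (le_trans h1 (le_trans hq.2.2 hr)) hRT
  have hpsiStar_nonneg : ∀ r (q : E2 × ℝ), 0 ≤ psiStar η p r q.1 q.2 := by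
    intro r q; exact Real.rpow_nonneg (etaStar_nonneg hη _) _
  have hpsiStar_le_one : ∀ r (q : E2 × ℝ), psiStar η p r q.1 q.2 ≤ 1 := by
    intro r q
    exact Real.rpow_le_one (etaStar_nonneg hη _) (etaStar_le_one hη _) he.le
  -- measurability of psiStar in q (for fixed r) and jointly
  have hrpow_m : Measurable fun x : ℝ => x ^ e := (Real.continuous_rpow_const he.le).measurable
  have hpsiStar_m : ∀ r, Measurable fun q : E2 × ℝ => psiStar η p r q.1 q.2 := by
    intro r
    simp only [psiStar]
    exact hrpow_m.comp ((measurable_etaStar hη).comp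
      (sigmaCont.measurable.div_const r))
  have hFm : ∀ r, Measurable (Ffun η p w r) := by
    intro r
    exact (hw_meas.mul (hpsiStar_m r)).indicator (measurableSet_Pset r)
  have hFnn : ∀ r ≤ R, ∀ q, 0 ≤ Ffun η p w r q := by
    intro r hr q
    exact Set.indicator_nonneg (fun q hq => mul_nonneg (hwnn r hr q hq) (hpsiStar_nonneg r q)) q
  -- joint measurability of Gfun
  have hGm : Measurable (Gfun η p w) := by
    have hS : MeasurableSet {z : ℝ × (E2 × ℝ) | z.2 ∈ Pset z.1} := by
      have h1 : MeasurableSet {z : ℝ × (E2 × ℝ) | 1 < ‖z.2.1‖} :=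
        measurableSet_lt measurable_const (measurable_snd.fst.norm)
      have h2 : MeasurableSet {z : ℝ × (E2 × ℝ) | 0 ≤ z.2.2} :=
        measurableSet_le measurable_const measurable_snd.snd
      have h3 : MeasurableSet {z : ℝ × (E2 × ℝ) | (‖z.2.1‖ - 1) ^ 2 + z.2.2 ≤ z.1} :=
        measurableSet_le (sigmaCont.measurable.comp measurable_snd) measurable_fst
      have : {z : ℝ × (E2 × ℝ) | z.2 ∈ Pset z.1} =
          ({z : ℝ × (E2 × ℝ) | 1 < ‖z.2.1‖} ∩ {z : ℝ × (E2 × ℝ) | 0 ≤ z.2.2}) ∩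
            {z : ℝ × (E2 × ℝ) | (‖z.2.1‖ - 1) ^ 2 + z.2.2 ≤ z.1} := by
        ext z; simp [Pset, Omega, and_assoc]
      rw [this]; exact (h1.inter h2).inter h3
    have hfm : Measurable fun z : ℝ × (E2 × ℝ) =>
        w z.2.1 z.2.2 * psiStar η p z.1 z.2.1 z.2.2 := by
      simp only [psiStar]
      exact (hw_meas.comp measurable_snd).mul
        (hrpow_m.comp ((measurable_etaStar hη).comp
          (((sigmaCont.measurable.comp measurable_snd)).div measurable_fst)))
    have hind : Measurable fun z : ℝ × (E2 × ℝ) =>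
        Ffun η p w z.1 z.2 := by
      have : (fun z : ℝ × (E2 × ℝ) => Ffun η p w z.1 z.2) =
          {z : ℝ × (E2 × ℝ) | z.2 ∈ Pset z.1}.indicator
            (fun z => w z.2.1 z.2.2 * psiStar η p z.1 z.2.1 z.2.2) := by
        funext z
        by_cases h : z.2 ∈ Pset z.1
        · rw [Ffun, Set.indicator_of_mem h,
            Set.indicator_of_mem (show z ∈ {z : ℝ × (E2 × ℝ) | z.2 ∈ Pset z.1} from h)]
        · rw [Ffun, Set.indicator_of_notMem h,
            Set.indicator_of_notMem (show z ∉ {z : ℝ × (E2 × ℝ) | z.2 ∈ Pset z.1} from h)]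
      rw [this]
      exact hfm.indicator hS
    exact (hind.mul measurable_fst.inv).ennreal_ofReal
  -- split Gfun lintegral
  have hGsplit : ∀ r ∈ Ioc (0:ℝ) R, (∫⁻ q, Gfun η p w (r, q))
      = (∫⁻ q, ENNReal.ofReal (Ffun η p w r q)) * ENNReal.ofReal r⁻¹ := by
    intro r hr
    rw [← lintegral_mul_const' (ENNReal.ofReal r⁻¹) _ ENNReal.ofReal_ne_top]
    apply lintegral_congr
    intro q
    rw [Gfun, ← ENNReal.ofReal_mul (hFnn r hr.2 q)]
  -- Step 1: rewrite each slice via lintegral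
  have step1 : ∀ r ∈ Ioc (0:ℝ) R,
      (∫ q in Pset r, w q.1 q.2 * psiStar η p r q.1 q.2) * r⁻¹
        = (∫⁻ q, Gfun η p w (r, q)).toReal := by
    intro r hr
    have h1 : ∫ q in Pset r, w q.1 q.2 * psiStar η p r q.1 q.2
        = ∫ q, Ffun η p w r q := (integral_indicator (measurableSet_Pset r)).symm
    rw [h1, integral_eq_lintegral_of_nonneg_ae
      (Filter.Eventually.of_forall (hFnn r hr.2)) (hFm r).aestronglyMeasurable,
      hGsplit r hr, ENNReal.toReal_mul, ENNReal.toReal_ofReal (inv_nonneg.mpr hr.1.le)]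
  -- finiteness of the slices
  have hfin : ∀ r ∈ Ioc (0:ℝ) R, (∫⁻ q, Gfun η p w (r, q)) < ⊤ := by
    intro r hr
    have hwint := hw_int r ⟨hr.1, lt_of_le_of_lt hr.2 hRT⟩
    have hb : ∀ q, ENNReal.ofReal (Ffun η p w r q)
        ≤ (Pset r).indicator (fun q => (‖w q.1 q.2‖₊ : ENNReal)) q := by
      intro q
      by_cases h : q ∈ Pset r
      · rw [Set.indicator_of_mem h, Ffun, Set.indicator_of_mem h]
        calc ENNReal.ofReal (w q.1 q.2 * psiStar η p r q.1 q.2)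
            ≤ ENNReal.ofReal (w q.1 q.2) := ENNReal.ofReal_le_ofReal
              (by nlinarith [hwnn r hr.2 q h, hpsiStar_nonneg r q, hpsiStar_le_one r q])
          _ ≤ (‖w q.1 q.2‖₊ : ENNReal) := Real.ofReal_le_enorm _
      · rw [Set.indicator_of_notMem h, Ffun, Set.indicator_of_notMem h, ENNReal.ofReal_zero]
    have h2 : ∫⁻ q, ENNReal.ofReal (Ffun η p w r q) < ⊤ := by
      calc ∫⁻ q, ENNReal.ofReal (Ffun η p w r q)
          ≤ ∫⁻ q, (Pset r).indicator (fun q => (‖w q.1 q.2‖₊ : ENNReal)) q := lintegral_mono hb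
        _ = ∫⁻ q in Pset r, (‖w q.1 q.2‖₊ : ENNReal) :=
            lintegral_indicator (measurableSet_Pset r) _
        _ < ⊤ := hwint.2
    rw [hGsplit r hr]
    exact ENNReal.mul_lt_top h2 ENNReal.ofReal_lt_top
  have hIocm : MeasurableSet (Ioc (0:ℝ) R) := measurableSet_Ioc
  -- Step 2: pass to a lintegral in r
  have step2 : ∫ r in Ioc (0:ℝ) R, (∫⁻ q, Gfun η p w (r, q)).toReal
      = (∫⁻ r in Ioc (0:ℝ) R, ∫⁻ q, Gfun η p w (r, q)).toReal := by
    apply integral_toReal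
    · exact (hGm.lintegral_prod_right').aemeasurable
    · exact (ae_restrict_mem hIocm).mono hfin
  -- Step 3: Tonelli
  have step3 : ∫⁻ r in Ioc (0:ℝ) R, ∫⁻ q, Gfun η p w (r, q)
      = ∫⁻ q, ∫⁻ r in Ioc (0:ℝ) R, Gfun η p w (r, q) := by
    exact lintegral_lintegral_swap hGm.aemeasurable
  -- Step 4: pointwise bound in q
  have step4 : ∀ q : E2 × ℝ,
      (∫⁻ r in Ioc (0:ℝ) R, Gfun η p w (r, q))
        ≤ ENNReal.ofReal (Real.log 2) *
          ENNReal.ofReal ((Pset R).indicator (fun q => w q.1 q.2 * psi η p R q.1 q.2) q) := by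
    intro q
    by_cases hq : q ∈ Pset R
    · set σ : ℝ := (‖q.1‖ - 1) ^ 2 + q.2 with hσdef
      have hσpos : 0 < σ := by
        have h1 : (0:ℝ) < (‖q.1‖ - 1) ^ 2 := pow_pos (sub_pos.mpr hq.1) 2
        have := hq.2.1
        nlinarith
      have hσR : σ ≤ R := hq.2.2
      set c : ℝ := w q.1 q.2 * psi η p R q.1 q.2 with hcdef
      have hc0 : 0 ≤ c := mul_nonneg (hwnn R le_rfl q hq)
        (Real.rpow_nonneg (eta_nonneg hη (div_nonneg hσpos.le hR0.le)) _)
      have hbound : ∀ r ∈ Ioc (0:ℝ) R, Gfun η p w (r, q)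
          ≤ (Ioc σ (2*σ)).indicator (fun r => ENNReal.ofReal c * ENNReal.ofReal r⁻¹) r := by
        intro r hr
        by_cases hmem : r ∈ Ioc σ (2*σ)
        · rw [Set.indicator_of_mem hmem]
          have hqr : q ∈ Pset r := ⟨hq.1, hq.2.1, hmem.1.le⟩
          have hF : Ffun η p w r q ≤ c := by
            rw [Ffun, Set.indicator_of_mem hqr, hcdef]
            apply mul_le_mul_of_nonneg_left _ (hwnn r hr.2 q hqr)
            show psiStar η p r q.1 q.2 ≤ psi η p R q.1 q.2
            rw [psiStar, psi, ← hσdef]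
            apply Real.rpow_le_rpow (etaStar_nonneg hη _) _ he.le
            apply etaStar_le_eta hη (div_nonneg hσpos.le hR0.le)
            gcongr
            · exact hr.1
            · exact hr.2
          calc Gfun η p w (r, q) = ENNReal.ofReal (Ffun η p w r q * r⁻¹) := rfl
            _ ≤ ENNReal.ofReal (c * r⁻¹) := ENNReal.ofReal_le_ofReal
                (mul_le_mul_of_nonneg_right hF (inv_nonneg.mpr hr.1.le))
            _ = ENNReal.ofReal c * ENNReal.ofReal r⁻¹ := ENNReal.ofReal_mul hc0
        · rw [Set.indicator_of_notMem hmem]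
          have hF0 : Ffun η p w r q * r⁻¹ = 0 := by
            rcases le_or_gt r σ with hrs | hrs
            · rcases eq_or_lt_of_le hrs with heq | hlt
              · have hqr : q ∈ Pset r := ⟨hq.1, hq.2.1, le_of_eq heq.symm⟩
                rw [Ffun, Set.indicator_of_mem hqr, psiStar, ← hσdef, heq,
                  div_self hσpos.ne']
                have hz : etaStar η 1 = 0 := by
                  rw [etaStar, if_neg (by norm_num)]
                  exact hη.2.2.2 1 le_rfl
                rw [hz, Real.zero_rpow he.ne', mul_zero, zero_mul]
              · rw [Ffun, Set.indicator_of_notMem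
                  (fun hmem' => absurd hmem'.2.2 (not_le.mpr hlt)), zero_mul]
            · have h2σ : 2*σ < r := by
                by_contra hcon
                exact hmem ⟨hrs, not_lt.mp hcon⟩
              have hhalf : σ / r < 1/2 := by
                rw [div_lt_iff₀ hr.1]
                nlinarith
              have hstar : etaStar η (σ / r) = 0 := by rw [etaStar, if_pos hhalf]
              have hval : w q.1 q.2 * psiStar η p r q.1 q.2 = 0 := by
                rw [psiStar, ← hσdef, hstar, Real.zero_rpow he.ne', mul_zero]
              rw [Ffun]
              by_cases hqq : q ∈ Pset r
              · rw [Set.indicator_of_mem hqq, hval, zero_mul]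
              · rw [Set.indicator_of_notMem hqq, zero_mul]
          simp only [Gfun]
          rw [hF0, ENNReal.ofReal_zero]
      have hiicc : σ ≤ 2*σ := by linarith
      calc ∫⁻ r in Ioc (0:ℝ) R, Gfun η p w (r, q)
          ≤ ∫⁻ r in Ioc (0:ℝ) R,
              (Ioc σ (2*σ)).indicator (fun r => ENNReal.ofReal c * ENNReal.ofReal r⁻¹) r :=
            lintegral_mono_ae ((ae_restrict_mem hIocm).mono hbound)
        _ ≤ ∫⁻ r in Ioc σ (2*σ), ENNReal.ofReal c * ENNReal.ofReal r⁻¹ := by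
            rw [lintegral_indicator measurableSet_Ioc,
              Measure.restrict_restrict measurableSet_Ioc]
            exact lintegral_mono' (Measure.restrict_mono Set.inter_subset_left le_rfl)
              (le_refl _)
        _ = ENNReal.ofReal c * ∫⁻ r in Ioc σ (2*σ), ENNReal.ofReal r⁻¹ :=
            lintegral_const_mul' _ _ ENNReal.ofReal_ne_top
        _ = ENNReal.ofReal c * ENNReal.ofReal (Real.log 2) := by
            congr 1
            have hii : IntervalIntegrable (fun x : ℝ => x⁻¹) volume σ (2*σ) := by
              apply intervalIntegral.intervalIntegrable_inv (f := fun x : ℝ => x)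
              · intro x hx
                rw [uIcc_of_le hiicc] at hx
                exact ne_of_gt (lt_of_lt_of_le hσpos hx.1)
              · exact continuousOn_id
            have hpos : 0 ≤ᵐ[volume.restrict (Ioc σ (2*σ))] fun r : ℝ => r⁻¹ :=
              (ae_restrict_mem measurableSet_Ioc).mono
                (fun r hr => inv_nonneg.mpr (le_of_lt (lt_trans hσpos hr.1)))
            rw [← ofReal_integral_eq_lintegral_ofReal hii.1 hpos]
            congr 1
            rw [← intervalIntegral.integral_of_le hiicc,
              integral_inv_of_pos hσpos (by linarith)]
            congr 1
            field_simp
        _ = ENNReal.ofReal (Real.log 2) *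
            ENNReal.ofReal ((Pset R).indicator (fun q => w q.1 q.2 * psi η p R q.1 q.2) q) := by
            rw [mul_comm]
            congr 2
            rw [Set.indicator_of_mem hq]
    · have hz : ∀ r ∈ Ioc (0:ℝ) R, Gfun η p w (r, q) ≤ 0 := by
        intro r hr
        have hnot : q ∉ Pset r := fun hmem => hq (Pset_mono hr.2 hmem)
        simp only [Gfun]
        rw [Ffun, Set.indicator_of_notMem hnot, zero_mul, ENNReal.ofReal_zero]
      calc ∫⁻ r in Ioc (0:ℝ) R, Gfun η p w (r, q)
          ≤ ∫⁻ _ in Ioc (0:ℝ) R, (0:ENNReal) :=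
            lintegral_mono_ae ((ae_restrict_mem hIocm).mono hz)
        _ = 0 := lintegral_zero
        _ ≤ _ := zero_le
  -- integrability and nonnegativity of the RHS integrand
  have hσnn : ∀ q ∈ Pset R, (0:ℝ) ≤ ((‖q.1‖ - 1) ^ 2 + q.2) / R := by
    intro q hq
    exact div_nonneg (by nlinarith [sq_nonneg (‖q.1‖ - 1), hq.2.1]) hR0.le
  have hposae : 0 ≤ᵐ[volume.restrict (Pset R)]
      fun q : E2 × ℝ => w q.1 q.2 * psi η p R q.1 q.2 := by
    refine (ae_restrict_mem (measurableSet_Pset R)).mono (fun q hq => ?_)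
    exact mul_nonneg (hwnn R le_rfl q hq)
      (Real.rpow_nonneg (eta_nonneg hη (hσnn q hq)) _)
  have hmeasR : AEStronglyMeasurable (fun q : E2 × ℝ => w q.1 q.2 * psi η p R q.1 q.2)
      (volume.restrict (Pset R)) := by
    have hg : Continuous fun q : E2 × ℝ => η (max (((‖q.1‖ - 1) ^ 2 + q.2) / R) 0) ^ e := by
      apply (Real.continuous_rpow_const he.le).comp
      exact hη.1.continuousOn.comp_continuous ((sigmaCont.div_const R).max continuous_const)
        (fun q => Set.mem_Ici.mpr (le_max_right _ _))
    refine AEStronglyMeasurable.congr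
      ((hw_meas.mul hg.measurable).aestronglyMeasurable).restrict ?_
    refine (ae_restrict_mem (measurableSet_Pset R)).mono (fun q hq => ?_)
    simp only [psi, Pi.mul_apply]
    rw [max_eq_left (hσnn q hq)]
  have hInt : IntegrableOn (fun q : E2 × ℝ => w q.1 q.2 * psi η p R q.1 q.2) (Pset R) := by
    apply Integrable.mono (hw_int R ⟨hR0, hRT⟩) hmeasR
    refine (ae_restrict_mem (measurableSet_Pset R)).mono (fun q hq => ?_)
    have hpnn : 0 ≤ psi η p R q.1 q.2 := Real.rpow_nonneg (eta_nonneg hη (hσnn q hq)) _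
    have hple : psi η p R q.1 q.2 ≤ 1 :=
      Real.rpow_le_one (eta_nonneg hη (hσnn q hq)) (eta_le_one hη (hσnn q hq)) he.le
    have hw0 := hwnn R le_rfl q hq
    rw [Real.norm_eq_abs, Real.norm_eq_abs, abs_of_nonneg (mul_nonneg hw0 hpnn),
      abs_of_nonneg hw0]
    nlinarith
  have hRHSnn : 0 ≤ ∫ q in Pset R, w q.1 q.2 * psi η p R q.1 q.2 := by
    apply setIntegral_nonneg (measurableSet_Pset R)
    intro q hq
    exact mul_nonneg (hwnn R le_rfl q hq)
      (Real.rpow_nonneg (eta_nonneg hη (hσnn q hq)) _)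
  -- Step 5: compute the bound integral
  have step5 : ∫⁻ q, ENNReal.ofReal (Real.log 2) *
      ENNReal.ofReal ((Pset R).indicator (fun q => w q.1 q.2 * psi η p R q.1 q.2) q)
      = ENNReal.ofReal (Real.log 2) *
        ENNReal.ofReal (∫ q in Pset R, w q.1 q.2 * psi η p R q.1 q.2) := by
    rw [lintegral_const_mul' _ _ ENNReal.ofReal_ne_top]
    congr 1
    have hcomp : ∀ q : E2 × ℝ,
        ENNReal.ofReal ((Pset R).indicator (fun q => w q.1 q.2 * psi η p R q.1 q.2) q)
        = (Pset R).indicator (fun q => ENNReal.ofReal (w q.1 q.2 * psi η p R q.1 q.2)) q := by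
      intro q
      by_cases h : q ∈ Pset R
      · rw [Set.indicator_of_mem h, Set.indicator_of_mem h]
      · rw [Set.indicator_of_notMem h, Set.indicator_of_notMem h, ENNReal.ofReal_zero]
    simp only [hcomp]
    rw [lintegral_indicator (measurableSet_Pset R),
      ← ofReal_integral_eq_lintegral_ofReal hInt hposae]
  -- Conclusion
  rw [intervalIntegral.integral_of_le hR0.le,
    MeasureTheory.setIntegral_congr_fun hIocm step1, step2]
  calc (∫⁻ r in Ioc (0:ℝ) R, ∫⁻ q, Gfun η p w (r, q)).toReal
      = (∫⁻ q, ∫⁻ r in Ioc (0:ℝ) R, Gfun η p w (r, q)).toReal := by rw [step3]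
    _ ≤ (ENNReal.ofReal (Real.log 2) *
          ENNReal.ofReal (∫ q in Pset R, w q.1 q.2 * psi η p R q.1 q.2)).toReal := by
        apply ENNReal.toReal_mono
          (ENNReal.mul_ne_top ENNReal.ofReal_ne_top ENNReal.ofReal_ne_top)
        calc ∫⁻ q, ∫⁻ r in Ioc (0:ℝ) R, Gfun η p w (r, q)
            ≤ ∫⁻ q, ENNReal.ofReal (Real.log 2) *
                ENNReal.ofReal ((Pset R).indicator
                  (fun q => w q.1 q.2 * psi η p R q.1 q.2) q) := lintegral_mono step4
          _ = _ := step5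
    _ = Real.log 2 * ∫ q in Pset R, w q.1 q.2 * psi η p R q.1 q.2 := by
        rw [ENNReal.toReal_mul, ENNReal.toReal_ofReal (Real.log_nonneg one_le_two),
          ENNReal.toReal_ofReal hRHSnn]
end
end

section
/- Let p > 1, θ ≥ 0, κ ∈ ℝ, δ > 0, C₀ > 0 and 1 < R₁ < T. Let Y : (0,T) → [0,∞) be nondecreasing, differentiable on (R₁,T), and suppose that for every R ∈ (R₁,T), (δ + (log 2)^{-1} Y(R))^{p} ≤ C₀^{p} R^{1−θ(p−1)} (log R)^{κ(p−1)} Y'(R). Then ∫_{log R₁}^{log T} e^{θ(p−1)s} s^{−κ(p−1)} ds ≤ (p−1)^{-1} (log 2) C₀^{p} δ^{-(p−1)}. -/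
open MeasureTheory Real Set

noncomputable section

lemma statement8_aux (p θ κ δ C₀ R₁ T : ℝ) (hp : 1 < p) (hθ : 0 ≤ θ) (hδ : 0 < δ)
    (hC₀ : 0 < C₀) (hR₁ : 1 < R₁) (hT : R₁ < T)
    (Y : ℝ → ℝ)
    (hY0 : ∀ R ∈ Set.Ioo (0 : ℝ) T, 0 ≤ Y R)
    (hYd : ∀ R ∈ Set.Ioo R₁ T, DifferentiableAt ℝ Y R)
    (hY : ∀ R ∈ Set.Ioo R₁ T,
      (δ + (Real.log 2)⁻¹ * Y R) ^ p
        ≤ C₀ ^ p * R ^ (1 - θ * (p - 1)) * Real.log R ^ (κ * (p - 1)) * deriv Y R)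
    (a' b' : ℝ) (ha' : Real.log R₁ < a') (hab : a' ≤ b') (hb' : b' < Real.log T) :
    ∫ s in a'..b', Real.exp (θ * (p - 1) * s) * s ^ (-(κ * (p - 1)))
      ≤ (p - 1)⁻¹ * Real.log 2 * C₀ ^ p * δ ^ (-(p - 1)) := by
  have hp1 : (0:ℝ) < p - 1 := by linarith
  have hl2 : (0:ℝ) < Real.log 2 := Real.log_pos (by norm_num)
  have ha0 : 0 < Real.log R₁ := Real.log_pos hR₁
  have hR₁0 : (0:ℝ) < R₁ := by linarith
  have hT0 : (0:ℝ) < T := by linarith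
  have hsub : Set.Icc a' b' ⊆ Set.Ioo (Real.log R₁) (Real.log T) :=
    fun s hs => ⟨lt_of_lt_of_le ha' hs.1, lt_of_le_of_lt hs.2 hb'⟩
  have hmem : ∀ s ∈ Set.Icc a' b', Real.exp s ∈ Set.Ioo R₁ T := by
    intro s hs
    obtain ⟨h1, h2⟩ := hsub hs
    constructor
    · calc R₁ = Real.exp (Real.log R₁) := (Real.exp_log hR₁0).symm
        _ < Real.exp s := Real.exp_lt_exp.mpr h1
    · calc Real.exp s < Real.exp (Real.log T) := Real.exp_lt_exp.mpr h2
        _ = T := Real.exp_log hT0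
  set G : ℝ → ℝ := fun s => δ + (Real.log 2)⁻¹ * Y (Real.exp s) with hGdef
  have hGpos : ∀ s ∈ Set.Icc a' b', 0 < G s := by
    intro s hs
    have h1 : Real.exp s ∈ Set.Ioo (0:ℝ) T := ⟨Real.exp_pos s, (hmem s hs).2⟩
    have h2 := hY0 _ h1
    have : 0 ≤ (Real.log 2)⁻¹ * Y (Real.exp s) := mul_nonneg (inv_nonneg.2 hl2.le) h2
    simp only [hGdef]; linarith
  set Ψ : ℝ → ℝ := fun s => Real.log 2 * C₀ ^ p * (-(p - 1)⁻¹ * G s ^ (-(p - 1))) with hΨdef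
  set Ψ' : ℝ → ℝ := fun s => Real.log 2 * C₀ ^ p *
    (G s ^ (-p) * ((Real.log 2)⁻¹ * (deriv Y (Real.exp s) * Real.exp s))) with hΨ'def
  have hderiv : ∀ s ∈ Set.Icc a' b', HasDerivAt Ψ (Ψ' s) s := by
    intro s hs
    have hGs := hGpos s hs
    have hEs := hmem s hs
    have h1 : HasDerivAt (fun u => Y (Real.exp u)) (deriv Y (Real.exp s) * Real.exp s) s :=
      ((hYd _ hEs).hasDerivAt).comp s (Real.hasDerivAt_exp s)
    have h2 : HasDerivAt G ((Real.log 2)⁻¹ * (deriv Y (Real.exp s) * Real.exp s)) s :=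
      (h1.const_mul _).const_add δ
    have h3 : HasDerivAt (fun x : ℝ => x ^ (-(p - 1))) (-(p - 1) * G s ^ (-(p - 1) - 1)) (G s) :=
      Real.hasDerivAt_rpow_const (Or.inl hGs.ne')
    have h4 := ((h3.comp s h2).const_mul (-(p - 1)⁻¹)).const_mul (Real.log 2 * C₀ ^ p)
    refine h4.congr_deriv (Eq.symm ?_)
    simp only [hΨ'def]
    rw [show (-(p - 1) - 1 : ℝ) = -p by ring]
    rw [show -(p - 1)⁻¹ * (-(p - 1) * G s ^ (-p) * ((Real.log 2)⁻¹ * (deriv Y (Real.exp s) * Real.exp s)))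
        = ((p - 1)⁻¹ * (p - 1)) * (G s ^ (-p) * ((Real.log 2)⁻¹ * (deriv Y (Real.exp s) * Real.exp s))) from by
          ring,
      inv_mul_cancel₀ hp1.ne', one_mul]
  have hφΨ : ∀ s ∈ Set.Ioo a' b',
      Real.exp (θ * (p - 1) * s) * s ^ (-(κ * (p - 1))) ≤ Ψ' s := by
    intro s hs
    have hs' : s ∈ Set.Icc a' b' := Set.Ioo_subset_Icc_self hs
    have hE := hmem s hs'
    have hGs := hGpos s hs'
    have hspos : 0 < s := lt_trans ha0 (hsub hs').1
    have hhY := hY _ hE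
    rw [Real.log_exp] at hhY
    have hEpos : 0 < Real.exp s := Real.exp_pos s
    set E := Real.exp s with hEdef
    have hhY' : G s ^ p ≤ C₀ ^ p * E ^ (1 - θ * (p - 1)) * s ^ (κ * (p - 1)) * deriv Y E := hhY
    have hA : 0 < G s ^ p := Real.rpow_pos_of_pos hGs p
    have hK1 : 0 < E ^ (1 - θ * (p - 1)) := Real.rpow_pos_of_pos hEpos _
    have hK2 : 0 < s ^ (κ * (p - 1)) := Real.rpow_pos_of_pos hspos _
    have hCp : 0 < C₀ ^ p := Real.rpow_pos_of_pos hC₀ p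
    have hD : 0 < deriv Y E := by
      by_contra h
      push_neg at h
      nlinarith [mul_pos (mul_pos hCp hK1) hK2]
    have hid1 : Real.exp (θ * (p - 1) * s) = E ^ (θ * (p - 1)) := by
      rw [Real.rpow_def_of_pos hEpos, hEdef, Real.log_exp]
      ring_nf
    have hid2 : s ^ (-(κ * (p - 1))) = (s ^ (κ * (p - 1)))⁻¹ := Real.rpow_neg hspos.le _
    have hid3 : E ^ (θ * (p - 1)) * E ^ (1 - θ * (p - 1)) = E := by
      rw [← Real.rpow_add hEpos, show θ * (p - 1) + (1 - θ * (p - 1)) = 1 by ring, Real.rpow_one]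
    have hGp : G s ^ (-p) = (G s ^ p)⁻¹ := Real.rpow_neg hGs.le p
    have hX : 0 < E ^ (θ * (p - 1)) := Real.rpow_pos_of_pos hEpos _
    rw [hid1, hid2]
    show E ^ (θ * (p - 1)) * (s ^ (κ * (p - 1)))⁻¹ ≤ Real.log 2 * C₀ ^ p *
      (G s ^ (-p) * ((Real.log 2)⁻¹ * (deriv Y E * E)))
    rw [hGp, show Real.log 2 * C₀ ^ p * ((G s ^ p)⁻¹ * ((Real.log 2)⁻¹ * (deriv Y E * E)))
        = (C₀ ^ p * (deriv Y E * E)) / (G s ^ p) by field_simp,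
      ← div_eq_mul_inv, div_le_div_iff₀ hK2 hA]
    have step1 : E ^ (θ * (p - 1)) * (G s ^ p)
        ≤ E ^ (θ * (p - 1)) * (C₀ ^ p * E ^ (1 - θ * (p - 1)) * s ^ (κ * (p - 1)) * deriv Y E) :=
      mul_le_mul_of_nonneg_left hhY' hX.le
    calc E ^ (θ * (p - 1)) * (G s ^ p)
        ≤ E ^ (θ * (p - 1)) * (C₀ ^ p * E ^ (1 - θ * (p - 1)) * s ^ (κ * (p - 1)) * deriv Y E) := step1
      _ = C₀ ^ p * (deriv Y E) * s ^ (κ * (p - 1)) * (E ^ (θ * (p - 1)) * E ^ (1 - θ * (p - 1))) := by ring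
      _ = C₀ ^ p * (deriv Y E * E) * s ^ (κ * (p - 1)) := by rw [hid3]; ring
  have hcont : ContinuousOn Ψ (Set.Icc a' b') :=
    fun s hs => ((hderiv s hs).continuousAt).continuousWithinAt
  have hφint : IntegrableOn (fun s => Real.exp (θ * (p - 1) * s) * s ^ (-(κ * (p - 1))))
      (Set.Icc a' b') := by
    apply ContinuousOn.integrableOn_compact isCompact_Icc
    apply ContinuousOn.mul
    · exact (Real.continuous_exp.comp (continuous_const.mul continuous_id)).continuousOn
    · exact ContinuousOn.rpow_const continuousOn_id
        (fun s hs => Or.inl (lt_trans ha0 (hsub hs).1).ne')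
  have hFTC := intervalIntegral.integral_le_sub_of_hasDeriv_right_of_le hab hcont
    (fun x hx => (hderiv x (Set.Ioo_subset_Icc_self hx)).hasDerivWithinAt) hφint hφΨ
  refine hFTC.trans ?_
  have hGa : δ ≤ G a' := by
    have h1 : Real.exp a' ∈ Set.Ioo (0:ℝ) T :=
      ⟨Real.exp_pos a', (hmem a' ⟨le_refl a', hab⟩).2⟩
    have h2 := hY0 _ h1
    have : 0 ≤ (Real.log 2)⁻¹ * Y (Real.exp a') := mul_nonneg (inv_nonneg.2 hl2.le) h2
    simp only [hGdef]; linarith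
  have h1 : G a' ^ (-(p - 1)) ≤ δ ^ (-(p - 1)) :=
    Real.rpow_le_rpow_of_nonpos hδ hGa (by linarith)
  have h2 : (0:ℝ) ≤ G b' ^ (-(p - 1)) :=
    Real.rpow_nonneg (hGpos b' ⟨hab, le_refl b'⟩).le _
  have hpos : 0 < Real.log 2 * C₀ ^ p * (p - 1)⁻¹ := by
    have : 0 < C₀ ^ p := Real.rpow_pos_of_pos hC₀ p
    positivity
  simp only [hΨdef]
  nlinarith [mul_le_mul_of_nonneg_left h1 hpos.le, mul_nonneg hpos.le h2]


section
variable (p θ κ δ C₀ R₁ T : ℝ) (Y : ℝ → ℝ)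

lemma statement8_main (hp : 1 < p) (hθ : 0 ≤ θ) (hδ : 0 < δ)
    (hC₀ : 0 < C₀) (hR₁ : 1 < R₁) (hT : R₁ < T)
    (hY0 : ∀ R ∈ Set.Ioo (0 : ℝ) T, 0 ≤ Y R)
    (hYd : ∀ R ∈ Set.Ioo R₁ T, DifferentiableAt ℝ Y R)
    (hY : ∀ R ∈ Set.Ioo R₁ T,
      (δ + (Real.log 2)⁻¹ * Y R) ^ p
        ≤ C₀ ^ p * R ^ (1 - θ * (p - 1)) * Real.log R ^ (κ * (p - 1)) * deriv Y R)
    (aux : ∀ a' b' : ℝ, Real.log R₁ < a' → a' ≤ b' → b' < Real.log T →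
      ∫ s in a'..b', Real.exp (θ * (p - 1) * s) * s ^ (-(κ * (p - 1)))
        ≤ (p - 1)⁻¹ * Real.log 2 * C₀ ^ p * δ ^ (-(p - 1))) :
    ∫ s in Real.log R₁..Real.log T, Real.exp (θ * (p - 1) * s) * s ^ (-(κ * (p - 1)))
      ≤ (p - 1)⁻¹ * Real.log 2 * C₀ ^ p * δ ^ (-(p - 1)) := by
  set a := Real.log R₁ with hadef
  set b := Real.log T with hbdef
  set h : ℝ → ℝ := fun s => Real.exp (θ * (p - 1) * s) * s ^ (-(κ * (p - 1))) with hhdef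
  set B := (p - 1)⁻¹ * Real.log 2 * C₀ ^ p * δ ^ (-(p - 1)) with hBdef
  have ha0 : 0 < a := Real.log_pos hR₁
  have hab : a < b := Real.log_lt_log (by linarith) hT
  have hcont : ContinuousOn h (Set.Icc a b) := by
    apply ContinuousOn.mul
    · exact (Real.continuous_exp.comp (continuous_const.mul continuous_id)).continuousOn
    · exact ContinuousOn.rpow_const continuousOn_id
        (fun s hs => Or.inl (lt_of_lt_of_le ha0 hs.1).ne')
  have hInt : IntervalIntegrable h volume a b := by
    apply ContinuousOn.intervalIntegrable
    rwa [Set.uIcc_of_le hab.le]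
  obtain ⟨M, hM⟩ := isCompact_Icc.exists_bound_of_continuousOn hcont
  have hM0 : 0 ≤ M := le_trans (norm_nonneg _) (hM a ⟨le_refl a, hab.le⟩)
  refine le_of_forall_pos_le_add ?_
  intro ε hε
  set t := min ((b - a) / 3) (ε / (2 * (M + 1))) with htdef
  have ht0 : 0 < t := lt_min (by linarith) (by positivity)
  have ht3 : t ≤ (b - a) / 3 := min_le_left _ _
  have htε : t ≤ ε / (2 * (M + 1)) := min_le_right _ _
  set a' := a + t with ha'def
  set b' := b - t with hb'def
  have haa' : a < a' := by simp only [ha'def]; linarith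
  have ha'b' : a' ≤ b' := by simp only [ha'def, hb'def]; linarith
  have hb'b : b' < b := by simp only [hb'def]; linarith
  have hI1 : IntervalIntegrable h volume a a' := by
    apply hInt.mono_set
    rw [Set.uIcc_of_le haa'.le, Set.uIcc_of_le hab.le]
    exact Set.Icc_subset_Icc le_rfl (by linarith)
  have hI2 : IntervalIntegrable h volume a' b := by
    apply hInt.mono_set
    rw [Set.uIcc_of_le (ha'b'.trans hb'b.le), Set.uIcc_of_le hab.le]
    exact Set.Icc_subset_Icc haa'.le le_rfl
  have hI3 : IntervalIntegrable h volume a' b' := by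
    apply hInt.mono_set
    rw [Set.uIcc_of_le ha'b', Set.uIcc_of_le hab.le]
    exact Set.Icc_subset_Icc haa'.le hb'b.le
  have hI4 : IntervalIntegrable h volume b' b := by
    apply hInt.mono_set
    rw [Set.uIcc_of_le hb'b.le, Set.uIcc_of_le hab.le]
    exact Set.Icc_subset_Icc (haa'.le.trans ha'b') le_rfl
  have split1 : (∫ s in a..b, h s) = (∫ s in a..a', h s) + ∫ s in a'..b, h s :=
    (intervalIntegral.integral_add_adjacent_intervals hI1 hI2).symm
  have split2 : (∫ s in a'..b, h s) = (∫ s in a'..b', h s) + ∫ s in b'..b, h s :=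
    (intervalIntegral.integral_add_adjacent_intervals hI3 hI4).symm
  have tail1 : ‖∫ s in a..a', h s‖ ≤ M * |a' - a| := by
    apply intervalIntegral.norm_integral_le_of_norm_le_const
    intro x hx
    rw [Set.uIoc_of_le haa'.le] at hx
    exact hM x ⟨hx.1.le, hx.2.trans (by linarith)⟩
  have tail2 : ‖∫ s in b'..b, h s‖ ≤ M * |b - b'| := by
    apply intervalIntegral.norm_integral_le_of_norm_le_const
    intro x hx
    rw [Set.uIoc_of_le hb'b.le] at hx
    exact hM x ⟨le_trans (by linarith) hx.1.le, hx.2⟩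
  have habs1 : |a' - a| = t := by rw [ha'def]; simp [abs_of_nonneg ht0.le]
  have habs2 : |b - b'| = t := by rw [hb'def]; rw [show b - (b - t) = t by ring]; exact abs_of_nonneg ht0.le
  have t1 : (∫ s in a..a', h s) ≤ M * t := by
    rw [habs1] at tail1
    exact (le_abs_self _).trans tail1
  have t2 : (∫ s in b'..b, h s) ≤ M * t := by
    rw [habs2] at tail2
    exact (le_abs_self _).trans tail2
  have mid : (∫ s in a'..b', h s) ≤ B := aux a' b' haa' ha'b' hb'b
  have htail : 2 * (M * t) ≤ ε := by
    have h1 : 2 * (M + 1) * t ≤ ε := by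
      calc 2 * (M + 1) * t ≤ 2 * (M + 1) * (ε / (2 * (M + 1))) :=
            mul_le_mul_of_nonneg_left htε (by positivity)
        _ = ε := by field_simp
    nlinarith
  calc (∫ s in a..b, h s) = (∫ s in a..a', h s) + (∫ s in a'..b', h s) + ∫ s in b'..b, h s := by
        rw [split1, split2]; ring
    _ ≤ M * t + B + M * t := by linarith
    _ ≤ B + ε := by linarith

end

/-- If `Y ≥ 0` is nondecreasing on `(0,T)`, differentiable on `(R₁,T)`, and
`(δ + (log 2)⁻¹ Y(R))^p ≤ C₀^p R^{1−θ(p−1)} (log R)^{κ(p−1)} Y'(R)` on `(R₁,T)`, then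
`∫_{log R₁}^{log T} e^{θ(p−1)s} s^{−κ(p−1)} ds ≤ (p−1)⁻¹ (log 2) C₀^p δ^{-(p−1)}`. -/
theorem statement8 (p θ κ δ C₀ R₁ T : ℝ) (hp : 1 < p) (hθ : 0 ≤ θ) (hδ : 0 < δ)
    (hC₀ : 0 < C₀) (hR₁ : 1 < R₁) (hT : R₁ < T)
    (Y : ℝ → ℝ)
    (hY0 : ∀ R ∈ Set.Ioo (0 : ℝ) T, 0 ≤ Y R)
    (hYmono : MonotoneOn Y (Set.Ioo (0 : ℝ) T))
    (hYd : ∀ R ∈ Set.Ioo R₁ T, DifferentiableAt ℝ Y R)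
    (hY : ∀ R ∈ Set.Ioo R₁ T,
      (δ + (Real.log 2)⁻¹ * Y R) ^ p
        ≤ C₀ ^ p * R ^ (1 - θ * (p - 1)) * Real.log R ^ (κ * (p - 1)) * deriv Y R) :
    ∫ s in Real.log R₁..Real.log T, Real.exp (θ * (p - 1) * s) * s ^ (-(κ * (p - 1)))
      ≤ (p - 1)⁻¹ * Real.log 2 * C₀ ^ p * δ ^ (-(p - 1)) := by
  exact statement8_main p θ κ δ C₀ R₁ T Y hp hθ hδ hC₀ hR₁ hT hY0 hYd hY
    (fun a' b' ha' hab' hb' =>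
      statement8_aux p θ κ δ C₀ R₁ T hp hθ hδ hC₀ hR₁ hT Y hY0 hYd hY a' b' ha' hab' hb')
end
end
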